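/- arXiv:2603.08554 — 6 statements merged into one kernel-verified Lean document; each statement's English description precedes it below -/
import Mathlib

section
/- Let φ₁, φ₂ be linearly independent vectors in a complex inner product space, α₀ ≠ 0 real, d = √((‖φ₁‖² - ‖φ₂‖²)² + 4|⟨φ₁,φ₂⟩|²), and λⱼ' = (‖φ₁‖² + ‖φ₂‖² + (-1)^{j+1} d) / (2α₀²(‖φ₁‖²‖φ₂‖² - |⟨φ₁,φ₂⟩|²)) for j = 1,2. Then λ₁' ≥ 1/(α₀²‖φⱼ‖²) and λ₂' ≤ 1/(α₀²‖φⱼ‖²) for j = 1,2. -/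
set_option maxHeartbeats 800000 in
theorem resonance_path_derivative_bounds
    {E : Type*} [NormedAddCommGroup E] [InnerProductSpace ℂ E]
    (φ₁ φ₂ : E) (hli : LinearIndependent ℂ ![φ₁, φ₂])
    (α₀ : ℝ) (hα₀ : α₀ ≠ 0)
    (d : ℝ)
    (hd : d = Real.sqrt ((‖φ₁‖ ^ 2 - ‖φ₂‖ ^ 2) ^ 2 + 4 * ‖(inner ℂ φ₁ φ₂ : ℂ)‖ ^ 2))
    (l₁' l₂' : ℝ)
    (hl₁ : l₁' = (‖φ₁‖ ^ 2 + ‖φ₂‖ ^ 2 + d) /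
        (2 * α₀ ^ 2 * (‖φ₁‖ ^ 2 * ‖φ₂‖ ^ 2 - ‖(inner ℂ φ₁ φ₂ : ℂ)‖ ^ 2)))
    (hl₂ : l₂' = (‖φ₁‖ ^ 2 + ‖φ₂‖ ^ 2 - d) /
        (2 * α₀ ^ 2 * (‖φ₁‖ ^ 2 * ‖φ₂‖ ^ 2 - ‖(inner ℂ φ₁ φ₂ : ℂ)‖ ^ 2))) :
    (l₁' ≥ 1 / (α₀ ^ 2 * ‖φ₁‖ ^ 2) ∧ l₁' ≥ 1 / (α₀ ^ 2 * ‖φ₂‖ ^ 2)) ∧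
    (l₂' ≤ 1 / (α₀ ^ 2 * ‖φ₁‖ ^ 2) ∧ l₂' ≤ 1 / (α₀ ^ 2 * ‖φ₂‖ ^ 2)) := by
  set a := ‖φ₁‖ ^ 2 with ha
  set b := ‖φ₂‖ ^ 2 with hb
  set c := ‖(inner ℂ φ₁ φ₂ : ℂ)‖ ^ 2 with hc
  have hfin := linearIndependent_fin2.mp hli
  have hx₀ : φ₁ ≠ 0 := by have := hli.ne_zero 0; simpa using this
  have hy₀ : φ₂ ≠ 0 := by have := hli.ne_zero 1; simpa using this
  have hne : ‖(inner ℂ φ₁ φ₂ : ℂ)‖ ≠ ‖φ₁‖ * ‖φ₂‖ := by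
    intro h
    obtain ⟨r, hr, hrr⟩ := (norm_inner_eq_norm_iff hx₀ hy₀).mp h
    have h2 := hfin.2 r⁻¹
    simp only [Matrix.cons_val_one, Matrix.head_cons, Matrix.cons_val_zero] at h2
    apply h2
    rw [hrr, smul_smul, inv_mul_cancel₀ hr, one_smul]
  have hcs : ‖(inner ℂ φ₁ φ₂ : ℂ)‖ < ‖φ₁‖ * ‖φ₂‖ :=
    lt_of_le_of_ne (norm_inner_le_norm _ _) hne
  have hclt : c < a * b := by
    rw [hc, ha, hb]
    calc ‖(inner ℂ φ₁ φ₂ : ℂ)‖ ^ 2 < (‖φ₁‖ * ‖φ₂‖) ^ 2 := by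
          exact pow_lt_pow_left₀ hcs (norm_nonneg _) (by norm_num)
      _ = ‖φ₁‖ ^ 2 * ‖φ₂‖ ^ 2 := by ring
  have hc0 : 0 ≤ c := by positivity
  have ha0 : 0 < a := by have := norm_pos_iff.mpr hx₀; positivity
  have hb0 : 0 < b := by have := norm_pos_iff.mpr hy₀; positivity
  have hα2 : 0 < α₀ ^ 2 := by positivity
  have hd0 : 0 ≤ d := hd ▸ Real.sqrt_nonneg _
  have hdsq : d ^ 2 = (a - b) ^ 2 + 4 * c := by
    rw [hd]; exact Real.sq_sqrt (by positivity)
  have hdge : |a - b| ≤ d := by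
    rw [← Real.sqrt_sq_eq_abs, hd]
    exact Real.sqrt_le_sqrt (by nlinarith)
  have hd1 : a - b ≤ d := le_trans (le_abs_self _) hdge
  have hd2 : b - a ≤ d := by have h := abs_le.mp hdge; linarith [h.1]
  have hden : 0 < 2 * α₀ ^ 2 * (a * b - c) := by nlinarith
  -- scalar key facts
  have k1 : 2 * (a * b - c) ≤ a * (a + b + d) := by
    nlinarith [mul_nonneg ha0.le (sub_nonneg.mpr hd2)]
  have k2 : 2 * (a * b - c) ≤ b * (a + b + d) := by
    nlinarith [mul_nonneg hb0.le (sub_nonneg.mpr hd1)]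
  have key3 : a * (a - b) + 2 * c ≤ a * d := by
    rcases le_or_gt (a * (a - b) + 2 * c) 0 with h | h
    · nlinarith
    · have hsq : (a * (a - b) + 2 * c) ^ 2 ≤ (a * d) ^ 2 := by
        nlinarith [mul_nonneg hc0 (sub_nonneg.mpr hclt.le)]
      exact le_of_pow_le_pow_left₀ two_ne_zero (by positivity) hsq
  have key4 : b * (b - a) + 2 * c ≤ b * d := by
    rcases le_or_gt (b * (b - a) + 2 * c) 0 with h | h
    · nlinarith
    · have hsq : (b * (b - a) + 2 * c) ^ 2 ≤ (b * d) ^ 2 := by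
        nlinarith [mul_nonneg hc0 (sub_nonneg.mpr hclt.le)]
      exact le_of_pow_le_pow_left₀ two_ne_zero (by positivity) hsq
  have k3 : a * (a + b - d) ≤ 2 * (a * b - c) := by nlinarith
  have k4 : b * (a + b - d) ≤ 2 * (a * b - c) := by nlinarith
  refine ⟨⟨?_, ?_⟩, ?_, ?_⟩
  · rw [hl₁, ge_iff_le, div_le_div_iff₀ (by positivity) hden]
    nlinarith [mul_le_mul_of_nonneg_left k1 hα2.le]
  · rw [hl₁, ge_iff_le, div_le_div_iff₀ (by positivity) hden]
    nlinarith [mul_le_mul_of_nonneg_left k2 hα2.le]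
  · rw [hl₂, div_le_div_iff₀ hden (by positivity)]
    nlinarith [mul_le_mul_of_nonneg_left k3 hα2.le]
  · rw [hl₂, div_le_div_iff₀ hden (by positivity)]
    nlinarith [mul_le_mul_of_nonneg_left k4 hα2.le]
end

section
/- With the notation of the previous statement (φ₁, φ₂ linearly independent, α₀ ≠ 0, d and λ₁', λ₂' as defined), the following are equivalent: (i) λ₁' = 1/(α₀²‖φ₁‖²) and λ₂' = 1/(α₀²‖φ₂‖²); (ii) ⟨φ₁,φ₂⟩ = 0. -/
theorem resonance_path_derivative_eq_iff_orthogonal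
    {E : Type*} [NormedAddCommGroup E] [InnerProductSpace ℂ E]
    (φ₁ φ₂ : E) (hli : LinearIndependent ℂ ![φ₁, φ₂])
    (hle : ‖φ₁‖ ≤ ‖φ₂‖)
    (α₀ : ℝ) (hα₀ : α₀ ≠ 0)
    (d : ℝ)
    (hd : d = Real.sqrt ((‖φ₁‖ ^ 2 - ‖φ₂‖ ^ 2) ^ 2 + 4 * ‖(inner ℂ φ₁ φ₂ : ℂ)‖ ^ 2))
    (l₁' l₂' : ℝ)
    (hl₁ : l₁' = (‖φ₁‖ ^ 2 + ‖φ₂‖ ^ 2 + d) /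
        (2 * α₀ ^ 2 * (‖φ₁‖ ^ 2 * ‖φ₂‖ ^ 2 - ‖(inner ℂ φ₁ φ₂ : ℂ)‖ ^ 2)))
    (hl₂ : l₂' = (‖φ₁‖ ^ 2 + ‖φ₂‖ ^ 2 - d) /
        (2 * α₀ ^ 2 * (‖φ₁‖ ^ 2 * ‖φ₂‖ ^ 2 - ‖(inner ℂ φ₁ φ₂ : ℂ)‖ ^ 2))) :
    (l₁' = 1 / (α₀ ^ 2 * ‖φ₁‖ ^ 2) ∧ l₂' = 1 / (α₀ ^ 2 * ‖φ₂‖ ^ 2)) ↔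
      (inner ℂ φ₁ φ₂ : ℂ) = 0 := by
  have hφ1 : φ₁ ≠ 0 := by simpa using hli.ne_zero 0
  have hφ2 : φ₂ ≠ 0 := by simpa using hli.ne_zero 1
  set a := ‖φ₁‖ with ha'
  set b := ‖φ₂‖ with hb'
  set c := ‖(inner ℂ φ₁ φ₂ : ℂ)‖ with hc'
  have ha : 0 < a := norm_pos_iff.2 hφ1
  have hb : 0 < b := norm_pos_iff.2 hφ2
  have hc0 : 0 ≤ c := norm_nonneg _
  have hα : 0 < α₀ ^ 2 := by positivity
  have hc : c < a * b := by
    rcases lt_or_eq_of_le (norm_inner_le_norm (𝕜 := ℂ) φ₁ φ₂) with h | h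
    · exact h
    · exfalso
      obtain ⟨r, hr, hrr⟩ := (norm_inner_eq_norm_iff (𝕜 := ℂ) hφ2 hφ1).1
        (by rw [norm_inner_symm]; rw [h]; ring)
      exact (linearIndependent_fin2.1 hli).2 r hrr.symm
  have hcab : c ^ 2 < a ^ 2 * b ^ 2 := by nlinarith
  have hdnn : 0 ≤ d := hd ▸ Real.sqrt_nonneg _
  have hdsq : d ^ 2 = (a ^ 2 - b ^ 2) ^ 2 + 4 * c ^ 2 := by
    rw [hd]; rw [Real.sq_sqrt]; positivity
  constructor
  · rintro ⟨h1, h2⟩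
    rw [hl₁] at h1
    rw [hl₂] at h2
    have hα2 : (α₀ ^ 2 : ℝ) ≠ 0 := pow_ne_zero 2 hα₀
    have hD : (0:ℝ) < 2 * α₀ ^ 2 * (a ^ 2 * b ^ 2 - c ^ 2) := by nlinarith
    rw [div_eq_div_iff (ne_of_gt hD) (by positivity)] at h1
    rw [div_eq_div_iff (ne_of_gt hD) (by positivity)] at h2
    have e1 : a ^ 2 * (a ^ 2 + b ^ 2 + d) = 2 * (a ^ 2 * b ^ 2 - c ^ 2) :=
      mul_left_cancel₀ hα2 (by linear_combination h1)
    have e2 : b ^ 2 * (a ^ 2 + b ^ 2 - d) = 2 * (a ^ 2 * b ^ 2 - c ^ 2) :=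
      mul_left_cancel₀ hα2 (by linear_combination h2)
    have hdv : d = b ^ 2 - a ^ 2 := by
      have key : d * (a ^ 2 + b ^ 2) = (b ^ 2 - a ^ 2) * (a ^ 2 + b ^ 2) := by
        linear_combination e1 - e2
      have hab : 0 < a ^ 2 + b ^ 2 := by positivity
      exact mul_right_cancel₀ (ne_of_gt hab) key
    rw [hdv] at hdsq
    have hc2 : c ^ 2 = 0 := by linarith [sq_nonneg (a ^ 2 - b ^ 2), sq_nonneg (b ^ 2 - a ^ 2), sq_abs (a ^ 2 - b ^ 2), sq_abs (b ^ 2 - a ^ 2), abs_sub_comm (a ^ 2) (b ^ 2)]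
    have hc3 : c = 0 := by nlinarith [hc2, hc0]
    exact norm_eq_zero.1 hc3
  · intro h
    have hcz : c = 0 := by rw [hc']; rw [h]; simp
    have hdv : d = b ^ 2 - a ^ 2 := by
      rw [hd, hcz]
      rw [show (a ^ 2 - b ^ 2) ^ 2 + 4 * (0:ℝ) ^ 2 = (b ^ 2 - a ^ 2) ^ 2 by ring]
      exact Real.sqrt_sq (by nlinarith)
    constructor
    · rw [hl₁, hcz, hdv]; field_simp; ring
    · rw [hl₂, hcz, hdv]; field_simp; ring
end

section
/- Let φ₁, φ₂ be linearly independent vectors in a complex inner product space with ‖φ₁‖ ≤ ‖φ₂‖ and ⟨φ₁,φ₂⟩ ≠ 0 or ‖φ₁‖ ≠ ‖φ₂‖, and let α₀ ≠ 0, d, λ₁', λ₂' be as above. Define a₁₁ = √((-1 + α₀²‖φ₂‖²λ₁')/d), a₁₂ = -q(⟨φ₁,φ₂⟩)√((-1 + α₀²‖φ₁‖²λ₁')/d), a₂₁ = √((1 - α₀²‖φ₂‖²λ₂')/d), a₂₂ = q(⟨φ₁,φ₂⟩)√((1 - α₀²‖φ₁‖²λ₂')/d), where q(z) = z/|z| for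 z ≠ 0 and q(0) = 1. Then for j = 1,2, aⱼ₁·aⱼ₂ = ((-1)^j / d)·α₀²·⟨φ₁,φ₂⟩·λⱼ'. -/
set_option maxHeartbeats 1000000

private lemma sqrt_key₁ (P Q c d α l : ℝ) (hP : 0 < P) (hQ : 0 < Q) (hc : 0 ≤ c)
    (hcPQ : c < P * Q) (hPQ : P ≤ Q) (hα : α ≠ 0) (hd0 : 0 < d)
    (hd2 : d ^ 2 = (P - Q) ^ 2 + 4 * c)
    (hl : l = (P + Q + d) / (2 * α ^ 2 * (P * Q - c))) :
    Real.sqrt ((-1 + α ^ 2 * Q * l) / d) * Real.sqrt ((-1 + α ^ 2 * P * l) / d)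
      = α ^ 2 * Real.sqrt c * l / d := by
  have hα2 : 0 < α ^ 2 := by positivity
  have hk : 0 < 2 * α ^ 2 * (P * Q - c) := by nlinarith
  have hdge : Q - P ≤ d := by nlinarith
  have hdle : d ≤ P + Q := by nlinarith
  have hl0 : 0 ≤ l := by rw [hl]; positivity
  have hA : 0 ≤ -1 + α ^ 2 * Q * l := by
    have h1 : 2 * (P * Q - c) ≤ Q * (P + Q + d) := by nlinarith
    rw [hl]
    have : (1 : ℝ) ≤ α ^ 2 * Q * ((P + Q + d) / (2 * α ^ 2 * (P * Q - c))) := by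
      rw [mul_div_assoc', le_div_iff₀ hk]
      nlinarith
    linarith [this]
  have hB : 0 ≤ -1 + α ^ 2 * P * l := by
    have h1 : 2 * (P * Q - c) ≤ P * (P + Q + d) := by nlinarith
    rw [hl]
    have : (1 : ℝ) ≤ α ^ 2 * P * ((P + Q + d) / (2 * α ^ 2 * (P * Q - c))) := by
      rw [mul_div_assoc', le_div_iff₀ hk]
      nlinarith
    linarith [this]
  have hA' : 0 ≤ (-1 + α ^ 2 * Q * l) / d := div_nonneg hA hd0.le
  have hs : Real.sqrt c ^ 2 = c := Real.sq_sqrt hc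
  have hs0 : 0 ≤ Real.sqrt c := Real.sqrt_nonneg c
  have hrhs : 0 ≤ α ^ 2 * Real.sqrt c * l / d := by positivity
  rw [← Real.sqrt_mul hA', ← Real.sqrt_sq hrhs]
  congr 1
  have key : (-1 + α ^ 2 * Q * l) * (-1 + α ^ 2 * P * l) = α ^ 4 * c * l ^ 2 := by
    have hK : (2 * α ^ 2 * (P * Q - c)) ≠ 0 := hk.ne'
    have hlK : l * (2 * α ^ 2 * (P * Q - c)) = P + Q + d := by rw [hl, div_mul_cancel₀ _ hK]
    have hPQc : P * Q - c ≠ 0 := (sub_pos.mpr hcPQ).ne'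
    have h1 : l * α ^ 2 * (P + Q - d) = 2 := by
      apply mul_right_cancel₀ (mul_ne_zero two_ne_zero hPQc)
      linear_combination (P + Q - d) * hlK - hd2
    linear_combination (α ^ 2 * l / 2) * hlK - (1 / 2) * h1
  have hsq : (α ^ 2 * Real.sqrt c * l) ^ 2 = α ^ 4 * c * l ^ 2 := by
    rw [mul_pow, mul_pow, hs]; ring
  rw [div_mul_div_comm, key, div_pow, hsq]
  ring

private lemma sqrt_key₂ (P Q c d α l : ℝ) (hP : 0 < P) (hQ : 0 < Q) (hc : 0 ≤ c)
    (hcPQ : c < P * Q) (hPQ : P ≤ Q) (hα : α ≠ 0) (hd0 : 0 < d)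
    (hd2 : d ^ 2 = (P - Q) ^ 2 + 4 * c)
    (hl : l = (P + Q - d) / (2 * α ^ 2 * (P * Q - c))) :
    Real.sqrt ((1 - α ^ 2 * Q * l) / d) * Real.sqrt ((1 - α ^ 2 * P * l) / d)
      = α ^ 2 * Real.sqrt c * l / d := by
  have hα2 : 0 < α ^ 2 := by positivity
  have hk : 0 < 2 * α ^ 2 * (P * Q - c) := by nlinarith
  have hdge : Q - P ≤ d := by nlinarith
  have hdle : d ≤ P + Q := by nlinarith
  have hl0 : 0 ≤ l := by
    rw [hl]
    apply div_nonneg _ hk.le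
    linarith
  have hprod : (d - (Q - P)) * (d + (Q - P)) = 4 * c := by nlinarith [hd2]
  have hu : 0 ≤ d - (Q - P) := by linarith
  have hv : 0 ≤ d + (Q - P) := by linarith
  have hA : 0 ≤ 1 - α ^ 2 * Q * l := by
    have h1 : Q * (P + Q - d) ≤ 2 * (P * Q - c) := by
      nlinarith [hprod, mul_nonneg hu (show (0:ℝ) ≤ Q - (d + (Q - P)) / 2 by linarith)]
    rw [hl]
    have : α ^ 2 * Q * ((P + Q - d) / (2 * α ^ 2 * (P * Q - c))) ≤ 1 := by
      rw [mul_div_assoc', div_le_iff₀ hk]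
      nlinarith
    linarith [this]
  have hB : 0 ≤ 1 - α ^ 2 * P * l := by
    have h1 : P * (P + Q - d) ≤ 2 * (P * Q - c) := by
      nlinarith [hprod, mul_nonneg hv (show (0:ℝ) ≤ P - (d - (Q - P)) / 2 by linarith)]
    rw [hl]
    have : α ^ 2 * P * ((P + Q - d) / (2 * α ^ 2 * (P * Q - c))) ≤ 1 := by
      rw [mul_div_assoc', div_le_iff₀ hk]
      nlinarith
    linarith [this]
  have hA' : 0 ≤ (1 - α ^ 2 * Q * l) / d := div_nonneg hA hd0.le
  have hs : Real.sqrt c ^ 2 = c := Real.sq_sqrt hc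
  have hs0 : 0 ≤ Real.sqrt c := Real.sqrt_nonneg c
  have hrhs : 0 ≤ α ^ 2 * Real.sqrt c * l / d := by positivity
  rw [← Real.sqrt_mul hA', ← Real.sqrt_sq hrhs]
  congr 1
  have key : (1 - α ^ 2 * Q * l) * (1 - α ^ 2 * P * l) = α ^ 4 * c * l ^ 2 := by
    have hK : (2 * α ^ 2 * (P * Q - c)) ≠ 0 := hk.ne'
    have hlK : l * (2 * α ^ 2 * (P * Q - c)) = P + Q - d := by rw [hl, div_mul_cancel₀ _ hK]
    have hPQc : P * Q - c ≠ 0 := (sub_pos.mpr hcPQ).ne'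
    have h1 : l * α ^ 2 * (P + Q + d) = 2 := by
      apply mul_right_cancel₀ (mul_ne_zero two_ne_zero hPQc)
      linear_combination (P + Q + d) * hlK - hd2
    linear_combination (α ^ 2 * l / 2) * hlK - (1 / 2) * h1
  have hsq : (α ^ 2 * Real.sqrt c * l) ^ 2 = α ^ 4 * c * l ^ 2 := by
    rw [mul_pow, mul_pow, hs]; ring
  rw [div_mul_div_comm, key, div_pow, hsq]
  ring

theorem eigenbasis_coefficients_product
    {E : Type*} [NormedAddCommGroup E] [InnerProductSpace ℂ E]
    (φ₁ φ₂ : E) (hli : LinearIndependent ℂ ![φ₁, φ₂])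
    (hnd : (inner ℂ φ₁ φ₂ : ℂ) ≠ 0 ∨ ‖φ₁‖ ≠ ‖φ₂‖)
    (α₀ : ℝ) (hα₀ : α₀ ≠ 0)
    (d : ℝ)
    (hd : d = Real.sqrt ((‖φ₁‖ ^ 2 - ‖φ₂‖ ^ 2) ^ 2 + 4 * ‖(inner ℂ φ₁ φ₂ : ℂ)‖ ^ 2))
    (l₁' l₂' : ℝ)
    (hl₁ : l₁' = (‖φ₁‖ ^ 2 + ‖φ₂‖ ^ 2 + d) /
        (2 * α₀ ^ 2 * (‖φ₁‖ ^ 2 * ‖φ₂‖ ^ 2 - ‖(inner ℂ φ₁ φ₂ : ℂ)‖ ^ 2)))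
    (hl₂ : l₂' = (‖φ₁‖ ^ 2 + ‖φ₂‖ ^ 2 - d) /
        (2 * α₀ ^ 2 * (‖φ₁‖ ^ 2 * ‖φ₂‖ ^ 2 - ‖(inner ℂ φ₁ φ₂ : ℂ)‖ ^ 2)))
    (hle : ‖φ₁‖ ≤ ‖φ₂‖)
    (q : ℂ)
    (hq : q = if (inner ℂ φ₁ φ₂ : ℂ) = 0 then 1
      else (inner ℂ φ₁ φ₂ : ℂ) / ‖(inner ℂ φ₁ φ₂ : ℂ)‖)
    (a₁₁ a₁₂ a₂₁ a₂₂ : ℂ)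
    (ha₁₁ : a₁₁ = (Real.sqrt ((-1 + α₀ ^ 2 * ‖φ₂‖ ^ 2 * l₁') / d) : ℝ))
    (ha₁₂ : a₁₂ = -q * (Real.sqrt ((-1 + α₀ ^ 2 * ‖φ₁‖ ^ 2 * l₁') / d) : ℝ))
    (ha₂₁ : a₂₁ = (Real.sqrt ((1 - α₀ ^ 2 * ‖φ₂‖ ^ 2 * l₂') / d) : ℝ))
    (ha₂₂ : a₂₂ = q * (Real.sqrt ((1 - α₀ ^ 2 * ‖φ₁‖ ^ 2 * l₂') / d) : ℝ)) :
    a₁₁ * a₁₂ = ((-1 : ℂ) / (d : ℝ)) * (α₀ : ℝ) ^ 2 * (inner ℂ φ₁ φ₂ : ℂ) * (l₁' : ℝ) ∧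
    a₂₁ * a₂₂ = ((1 : ℂ) / (d : ℝ)) * (α₀ : ℝ) ^ 2 * (inner ℂ φ₁ φ₂ : ℂ) * (l₂' : ℝ) := by
  have hφ₁ : φ₁ ≠ 0 := by
    have := hli.ne_zero 0; simpa using this
  have hφ₂ : φ₂ ≠ 0 := by
    have := hli.ne_zero 1; simpa using this
  have hn1 : 0 < ‖φ₁‖ := norm_pos_iff.mpr hφ₁
  have hn2 : 0 < ‖φ₂‖ := norm_pos_iff.mpr hφ₂
  have hP : 0 < ‖φ₁‖ ^ 2 := by positivity
  have hQ : 0 < ‖φ₂‖ ^ 2 := by positivity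
  have hc : (0:ℝ) ≤ ‖(inner ℂ φ₁ φ₂ : ℂ)‖ ^ 2 := by positivity
  have hnotmul : ¬ ∃ r : ℂ, φ₁ = r • φ₂ := by
    rintro ⟨r, hr⟩
    have h2 := (linearIndependent_fin2.mp hli).2 r
    exact h2 hr.symm
  have hcs : ‖(inner ℂ φ₁ φ₂ : ℂ)‖ < ‖φ₁‖ * ‖φ₂‖ := by
    rcases lt_or_eq_of_le (norm_inner_le_norm (𝕜 := ℂ) φ₁ φ₂) with h | h
    · exact h
    · exfalso
      have hsymm : ‖(inner ℂ φ₂ φ₁ : ℂ)‖ = ‖φ₂‖ * ‖φ₁‖ := by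
        rw [← inner_conj_symm, RCLike.norm_conj, h]; ring
      obtain ⟨r, _, hr⟩ := (norm_inner_eq_norm_iff (𝕜 := ℂ) hφ₂ hφ₁).mp hsymm
      exact hnotmul ⟨r, hr⟩
  have hcPQ : ‖(inner ℂ φ₁ φ₂ : ℂ)‖ ^ 2 < ‖φ₁‖ ^ 2 * ‖φ₂‖ ^ 2 := by
    nlinarith [norm_nonneg (inner ℂ φ₁ φ₂ : ℂ), norm_nonneg φ₁, norm_nonneg φ₂]
  have hPQ : ‖φ₁‖ ^ 2 ≤ ‖φ₂‖ ^ 2 :=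
    pow_le_pow_left₀ (norm_nonneg _) hle 2
  have harg : 0 ≤ (‖φ₁‖ ^ 2 - ‖φ₂‖ ^ 2) ^ 2 + 4 * ‖(inner ℂ φ₁ φ₂ : ℂ)‖ ^ 2 := by positivity
  have hd2 : d ^ 2 = (‖φ₁‖ ^ 2 - ‖φ₂‖ ^ 2) ^ 2 + 4 * ‖(inner ℂ φ₁ φ₂ : ℂ)‖ ^ 2 := by
    rw [hd, Real.sq_sqrt harg]
  have hd0 : 0 < d := by
    rw [hd, Real.sqrt_pos]
    rcases hnd with h | h
    · have : 0 < ‖(inner ℂ φ₁ φ₂ : ℂ)‖ := norm_pos_iff.mpr h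
      nlinarith [sq_nonneg (‖φ₁‖ ^ 2 - ‖φ₂‖ ^ 2)]
    · have h2 : ‖φ₁‖ ^ 2 ≠ ‖φ₂‖ ^ 2 := by
        intro he
        exact h (by nlinarith [norm_nonneg φ₁, norm_nonneg φ₂])
      have h2' : ‖φ₁‖ ^ 2 - ‖φ₂‖ ^ 2 ≠ 0 := sub_ne_zero.mpr h2
      have h3 : (‖φ₁‖ ^ 2 - ‖φ₂‖ ^ 2) ^ 2 > 0 := by positivity
      nlinarith
  have hsqc : Real.sqrt (‖(inner ℂ φ₁ φ₂ : ℂ)‖ ^ 2) = ‖(inner ℂ φ₁ φ₂ : ℂ)‖ :=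
    Real.sqrt_sq (norm_nonneg _)
  have hr₁ := sqrt_key₁ (‖φ₁‖ ^ 2) (‖φ₂‖ ^ 2) (‖(inner ℂ φ₁ φ₂ : ℂ)‖ ^ 2) d α₀ l₁'
    hP hQ hc hcPQ hPQ hα₀ hd0 hd2 hl₁
  have hr₂ := sqrt_key₂ (‖φ₁‖ ^ 2) (‖φ₂‖ ^ 2) (‖(inner ℂ φ₁ φ₂ : ℂ)‖ ^ 2) d α₀ l₂'
    hP hQ hc hcPQ hPQ hα₀ hd0 hd2 hl₂
  rw [hsqc] at hr₁ hr₂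
  have hdc : (d : ℂ) ≠ 0 := by exact_mod_cast hd0.ne'
  rcases eq_or_ne (inner ℂ φ₁ φ₂ : ℂ) 0 with hz | hz
  · have hne : ‖φ₁‖ ≠ ‖φ₂‖ := by
      rcases hnd with h | h
      · exact absurd hz h
      · exact h
    have hlt : ‖φ₁‖ < ‖φ₂‖ := hle.lt_of_ne hne
    have hPQlt : ‖φ₁‖ ^ 2 < ‖φ₂‖ ^ 2 := by nlinarith
    have hcz : ‖(inner ℂ φ₁ φ₂ : ℂ)‖ = 0 := by simp [hz]
    have hdval : d = ‖φ₂‖ ^ 2 - ‖φ₁‖ ^ 2 := by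
      rw [hd, hcz]
      rw [show ((4:ℝ) * 0 ^ 2) = 0 by ring, add_zero, Real.sqrt_sq_eq_abs, abs_sub_comm]
      exact abs_of_nonneg (by linarith)
    constructor
    · have hrad : (-1 + α₀ ^ 2 * ‖φ₁‖ ^ 2 * l₁') = 0 := by
        rw [hl₁, hcz, hdval]
        field_simp
        ring
      rw [ha₁₁, ha₁₂, hz, hrad]
      simp
    · have hrad : (1 - α₀ ^ 2 * ‖φ₂‖ ^ 2 * l₂') = 0 := by
        rw [hl₂, hcz, hdval]
        field_simp
        ring
      rw [ha₂₁, ha₂₂, hz, hrad]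
      simp
  · have hq' : q = (inner ℂ φ₁ φ₂ : ℂ) / ‖(inner ℂ φ₁ φ₂ : ℂ)‖ := by rw [hq, if_neg hz]
    have hnz : (‖(inner ℂ φ₁ φ₂ : ℂ)‖ : ℂ) ≠ 0 := by
      simpa using norm_ne_zero_iff.mpr hz
    constructor
    · rw [ha₁₁, ha₁₂, hq']
      have e := congrArg (fun x : ℝ => (x : ℂ)) hr₁
      push_cast at e
      linear_combination (-(inner ℂ φ₁ φ₂ : ℂ) / (‖(inner ℂ φ₁ φ₂ : ℂ)‖ : ℂ)) * e
        + (-(inner ℂ φ₁ φ₂ : ℂ) * (α₀ : ℂ) ^ 2 * (l₁' : ℂ) / (d : ℂ)) * (mul_inv_cancel₀ hnz)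
    · rw [ha₂₁, ha₂₂, hq']
      have e := congrArg (fun x : ℝ => (x : ℂ)) hr₂
      push_cast at e
      linear_combination ((inner ℂ φ₁ φ₂ : ℂ) / (‖(inner ℂ φ₁ φ₂ : ℂ)‖ : ℂ)) * e
        + ((inner ℂ φ₁ φ₂ : ℂ) * (α₀ : ℂ) ^ 2 * (l₂' : ℂ) / (d : ℂ)) * (mul_inv_cancel₀ hnz)
end

section
/- With the same notation and hypotheses as in the previous statement, for j,k ∈ {1,2} one has conj(aⱼ₁)·aₖ₁ + conj(aⱼ₂)·aₖ₂ = δⱼₖ·α₀²·λⱼ'. In particular the 2×2 matrix (aⱼₖ) has orthogonal rows with squared row norms α₀²λⱼ'. -/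
set_option maxHeartbeats 1000000 in
theorem eigenbasis_coefficients_rows_orthogonal
    {E : Type*} [NormedAddCommGroup E] [InnerProductSpace ℂ E]
    (φ₁ φ₂ : E) (hli : LinearIndependent ℂ ![φ₁, φ₂])
    (hnd : (inner ℂ φ₁ φ₂ : ℂ) ≠ 0 ∨ ‖φ₁‖ ≠ ‖φ₂‖)
    (α₀ : ℝ) (hα₀ : α₀ ≠ 0)
    (d : ℝ)
    (hd : d = Real.sqrt ((‖φ₁‖ ^ 2 - ‖φ₂‖ ^ 2) ^ 2 + 4 * ‖(inner ℂ φ₁ φ₂ : ℂ)‖ ^ 2))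
    (l₁' l₂' : ℝ)
    (hl₁ : l₁' = (‖φ₁‖ ^ 2 + ‖φ₂‖ ^ 2 + d) /
        (2 * α₀ ^ 2 * (‖φ₁‖ ^ 2 * ‖φ₂‖ ^ 2 - ‖(inner ℂ φ₁ φ₂ : ℂ)‖ ^ 2)))
    (hl₂ : l₂' = (‖φ₁‖ ^ 2 + ‖φ₂‖ ^ 2 - d) /
        (2 * α₀ ^ 2 * (‖φ₁‖ ^ 2 * ‖φ₂‖ ^ 2 - ‖(inner ℂ φ₁ φ₂ : ℂ)‖ ^ 2)))
    (hle : ‖φ₁‖ ≤ ‖φ₂‖)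
    (q : ℂ)
    (hq : q = if (inner ℂ φ₁ φ₂ : ℂ) = 0 then 1
      else (inner ℂ φ₁ φ₂ : ℂ) / ‖(inner ℂ φ₁ φ₂ : ℂ)‖)
    (a₁₁ a₁₂ a₂₁ a₂₂ : ℂ)
    (ha₁₁ : a₁₁ = (Real.sqrt ((-1 + α₀ ^ 2 * ‖φ₂‖ ^ 2 * l₁') / d) : ℝ))
    (ha₁₂ : a₁₂ = -q * (Real.sqrt ((-1 + α₀ ^ 2 * ‖φ₁‖ ^ 2 * l₁') / d) : ℝ))
    (ha₂₁ : a₂₁ = (Real.sqrt ((1 - α₀ ^ 2 * ‖φ₂‖ ^ 2 * l₂') / d) : ℝ))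
    (ha₂₂ : a₂₂ = q * (Real.sqrt ((1 - α₀ ^ 2 * ‖φ₁‖ ^ 2 * l₂') / d) : ℝ)) :
    (starRingEnd ℂ) a₁₁ * a₁₁ + (starRingEnd ℂ) a₁₂ * a₁₂ = ((α₀ ^ 2 * l₁' : ℝ) : ℂ) ∧
    (starRingEnd ℂ) a₂₁ * a₂₁ + (starRingEnd ℂ) a₂₂ * a₂₂ = ((α₀ ^ 2 * l₂' : ℝ) : ℂ) ∧
    (starRingEnd ℂ) a₁₁ * a₂₁ + (starRingEnd ℂ) a₁₂ * a₂₂ = 0 ∧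
    (starRingEnd ℂ) a₂₁ * a₁₁ + (starRingEnd ℂ) a₂₂ * a₁₂ = 0 := by
  set a := ‖φ₁‖ with ha
  set b := ‖φ₂‖ with hb
  set c := ‖(inner ℂ φ₁ φ₂ : ℂ)‖ with hc
  -- basic nondegeneracy facts
  rw [linearIndependent_fin2] at hli
  have hli2 : ∀ r : ℂ, r • φ₂ ≠ φ₁ := by
    intro r
    have := hli.2 r
    simpa using this
  have hφ₂ : φ₂ ≠ 0 := by simpa using hli.1
  have hφ₁ : φ₁ ≠ 0 := by
    intro h; exact hli2 0 (by simp [h])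
  have hcs : c < a * b := by
    refine lt_of_le_of_ne (norm_inner_le_norm _ _) ?_
    intro h
    obtain ⟨r, hr, hrr⟩ := (norm_inner_eq_norm_iff hφ₁ hφ₂).1 h
    exact hli2 r⁻¹ (by rw [hrr, smul_smul, inv_mul_cancel₀ hr, one_smul])
  have ha0 : 0 ≤ a := norm_nonneg _
  have hb0 : 0 ≤ b := norm_nonneg _
  have hc0 : 0 ≤ c := norm_nonneg _
  have hG : 0 < a ^ 2 * b ^ 2 - c ^ 2 := by nlinarith
  have hGne : a ^ 2 * b ^ 2 - c ^ 2 ≠ 0 := ne_of_gt hG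
  have hd2 : d ^ 2 = (a ^ 2 - b ^ 2) ^ 2 + 4 * c ^ 2 := by
    rw [hd]; exact Real.sq_sqrt (by positivity)
  have hd0 : 0 < d := by
    rw [hd]
    apply Real.sqrt_pos.2
    rcases hnd with h | h
    · have : 0 < c := norm_pos_iff.2 h
      nlinarith [sq_nonneg (a ^ 2 - b ^ 2)]
    · have hab : a ^ 2 - b ^ 2 ≠ 0 := by
        intro h2; exact h (by nlinarith)
      have : 0 < (a ^ 2 - b ^ 2) ^ 2 := by positivity
      nlinarith
  have hab2 : a ^ 2 ≤ b ^ 2 := by nlinarith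
  have hdu : b ^ 2 - a ^ 2 ≤ d := by nlinarith
  have hdle : d ≤ a ^ 2 + b ^ 2 := by nlinarith
  -- numerator nonnegativity
  have hnx₁ : 0 ≤ b ^ 2 * (a ^ 2 + b ^ 2 + d) - 2 * (a ^ 2 * b ^ 2 - c ^ 2) := by
    nlinarith [mul_nonneg (sq_nonneg b) (sub_nonneg.2 hab2), mul_nonneg (sq_nonneg b) hd0.le]
  have hny₁ : 0 ≤ a ^ 2 * (a ^ 2 + b ^ 2 + d) - 2 * (a ^ 2 * b ^ 2 - c ^ 2) := by
    nlinarith [mul_nonneg (sq_nonneg a) (by linarith : (0:ℝ) ≤ d - (b ^ 2 - a ^ 2))]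
  have hnx₂ : 0 ≤ 2 * (a ^ 2 * b ^ 2 - c ^ 2) - b ^ 2 * (a ^ 2 + b ^ 2 - d) := by
    nlinarith [mul_nonneg (by linarith : (0:ℝ) ≤ d - (b ^ 2 - a ^ 2)) (sub_nonneg.2 hdle)]
  have hny₂ : 0 ≤ 2 * (a ^ 2 * b ^ 2 - c ^ 2) - a ^ 2 * (a ^ 2 + b ^ 2 - d) := by
    nlinarith [mul_nonneg (by linarith : (0:ℝ) ≤ d + (b ^ 2 - a ^ 2)) (sub_nonneg.2 hdle)]
  -- rewrite the sqrt arguments as explicit quotients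
  have eX₁ : -1 + α₀ ^ 2 * b ^ 2 * l₁'
      = (b ^ 2 * (a ^ 2 + b ^ 2 + d) - 2 * (a ^ 2 * b ^ 2 - c ^ 2))
        / (2 * (a ^ 2 * b ^ 2 - c ^ 2)) := by
    have hG' : b ^ 2 * a ^ 2 - c ^ 2 ≠ 0 := by rwa [mul_comm]
    rw [hl₁]; field_simp; ring
  have eY₁ : -1 + α₀ ^ 2 * a ^ 2 * l₁'
      = (a ^ 2 * (a ^ 2 + b ^ 2 + d) - 2 * (a ^ 2 * b ^ 2 - c ^ 2))
        / (2 * (a ^ 2 * b ^ 2 - c ^ 2)) := by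
    rw [hl₁]; field_simp; ring
  have eX₂ : 1 - α₀ ^ 2 * b ^ 2 * l₂'
      = (2 * (a ^ 2 * b ^ 2 - c ^ 2) - b ^ 2 * (a ^ 2 + b ^ 2 - d))
        / (2 * (a ^ 2 * b ^ 2 - c ^ 2)) := by
    have hG' : b ^ 2 * a ^ 2 - c ^ 2 ≠ 0 := by rwa [mul_comm]
    rw [hl₂]; field_simp
  have eY₂ : 1 - α₀ ^ 2 * a ^ 2 * l₂'
      = (2 * (a ^ 2 * b ^ 2 - c ^ 2) - a ^ 2 * (a ^ 2 + b ^ 2 - d))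
        / (2 * (a ^ 2 * b ^ 2 - c ^ 2)) := by
    rw [hl₂]; field_simp
  have hX₁ : 0 ≤ (-1 + α₀ ^ 2 * b ^ 2 * l₁') / d := by
    rw [eX₁]; exact div_nonneg (div_nonneg hnx₁ (by linarith)) hd0.le
  have hY₁ : 0 ≤ (-1 + α₀ ^ 2 * a ^ 2 * l₁') / d := by
    rw [eY₁]; exact div_nonneg (div_nonneg hny₁ (by linarith)) hd0.le
  have hX₂ : 0 ≤ (1 - α₀ ^ 2 * b ^ 2 * l₂') / d := by
    rw [eX₂]; exact div_nonneg (div_nonneg hnx₂ (by linarith)) hd0.le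
  have hY₂ : 0 ≤ (1 - α₀ ^ 2 * a ^ 2 * l₂') / d := by
    rw [eY₂]; exact div_nonneg (div_nonneg hny₂ (by linarith)) hd0.le
  -- key real identities
  have hl₁' : 2 * (a ^ 2 * b ^ 2 - c ^ 2) * (α₀ ^ 2 * l₁') = a ^ 2 + b ^ 2 + d := by
    rw [hl₁]; field_simp
  have hl₂' : 2 * (a ^ 2 * b ^ 2 - c ^ 2) * (α₀ ^ 2 * l₂') = a ^ 2 + b ^ 2 - d := by
    rw [hl₂]; field_simp
  have h2G : (2:ℝ) * (a ^ 2 * b ^ 2 - c ^ 2) ≠ 0 := by positivity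
  have key1 : (-1 + α₀ ^ 2 * b ^ 2 * l₁') / d + (-1 + α₀ ^ 2 * a ^ 2 * l₁') / d
      = α₀ ^ 2 * l₁' := by
    rw [← add_div, div_eq_iff hd0.ne']
    apply mul_left_cancel₀ h2G
    linear_combination (a ^ 2 + b ^ 2 - d) * hl₁' - hd2
  have key2 : (1 - α₀ ^ 2 * b ^ 2 * l₂') / d + (1 - α₀ ^ 2 * a ^ 2 * l₂') / d
      = α₀ ^ 2 * l₂' := by
    rw [← add_div, div_eq_iff hd0.ne']
    apply mul_left_cancel₀ h2G
    linear_combination -(a ^ 2 + b ^ 2 + d) * hl₂' + hd2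
  have keynum : (b ^ 2 * (a ^ 2 + b ^ 2 + d) - 2 * (a ^ 2 * b ^ 2 - c ^ 2))
        * (2 * (a ^ 2 * b ^ 2 - c ^ 2) - b ^ 2 * (a ^ 2 + b ^ 2 - d))
      = (a ^ 2 * (a ^ 2 + b ^ 2 + d) - 2 * (a ^ 2 * b ^ 2 - c ^ 2))
        * (2 * (a ^ 2 * b ^ 2 - c ^ 2) - a ^ 2 * (a ^ 2 + b ^ 2 - d)) := by
    linear_combination (b ^ 4 - a ^ 4) * hd2
  have keyx : ((-1 + α₀ ^ 2 * b ^ 2 * l₁') / d) * ((1 - α₀ ^ 2 * b ^ 2 * l₂') / d)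
      = ((-1 + α₀ ^ 2 * a ^ 2 * l₁') / d) * ((1 - α₀ ^ 2 * a ^ 2 * l₂') / d) := by
    rw [eX₁, eX₂, eY₁, eY₂]; simp only [div_mul_div_comm]; rw [keynum]
  -- q has unit modulus
  have hqn : ‖q‖ = 1 := by
    rw [hq]; split_ifs with h
    · simp
    · rw [norm_div, Complex.norm_real, Real.norm_eq_abs, abs_norm,
        div_self (norm_ne_zero_iff.2 h)]
  have hq1 : (starRingEnd ℂ) q * q = 1 := by
    rw [mul_comm, Complex.mul_conj, Complex.normSq_eq_norm_sq, hqn]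
    norm_num
  -- sqrt facts
  have sX₁ := Real.mul_self_sqrt hX₁
  have sY₁ := Real.mul_self_sqrt hY₁
  have sX₂ := Real.mul_self_sqrt hX₂
  have sY₂ := Real.mul_self_sqrt hY₂
  have hrs : Real.sqrt ((-1 + α₀ ^ 2 * b ^ 2 * l₁') / d)
        * Real.sqrt ((1 - α₀ ^ 2 * b ^ 2 * l₂') / d)
      = Real.sqrt ((-1 + α₀ ^ 2 * a ^ 2 * l₁') / d)
        * Real.sqrt ((1 - α₀ ^ 2 * a ^ 2 * l₂') / d) := by
    rw [← Real.sqrt_mul hX₁, ← Real.sqrt_mul hY₁, keyx]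
  refine ⟨?_, ?_, ?_, ?_⟩
  · rw [ha₁₁, ha₁₂]
    have expand : (starRingEnd ℂ) ((Real.sqrt ((-1 + α₀ ^ 2 * b ^ 2 * l₁') / d) : ℝ) : ℂ)
          * ((Real.sqrt ((-1 + α₀ ^ 2 * b ^ 2 * l₁') / d) : ℝ) : ℂ)
        + (starRingEnd ℂ) (-q * ((Real.sqrt ((-1 + α₀ ^ 2 * a ^ 2 * l₁') / d) : ℝ) : ℂ))
          * (-q * ((Real.sqrt ((-1 + α₀ ^ 2 * a ^ 2 * l₁') / d) : ℝ) : ℂ))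
        = ((Real.sqrt ((-1 + α₀ ^ 2 * b ^ 2 * l₁') / d)
              * Real.sqrt ((-1 + α₀ ^ 2 * b ^ 2 * l₁') / d) : ℝ) : ℂ)
          + ((starRingEnd ℂ) q * q)
            * ((Real.sqrt ((-1 + α₀ ^ 2 * a ^ 2 * l₁') / d)
              * Real.sqrt ((-1 + α₀ ^ 2 * a ^ 2 * l₁') / d) : ℝ) : ℂ) := by
      simp only [map_mul, map_neg, Complex.conj_ofReal]
      push_cast
      ring
    rw [expand, hq1, one_mul, sX₁, sY₁, ← Complex.ofReal_add, key1]
  · rw [ha₂₁, ha₂₂]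
    have expand : (starRingEnd ℂ) ((Real.sqrt ((1 - α₀ ^ 2 * b ^ 2 * l₂') / d) : ℝ) : ℂ)
          * ((Real.sqrt ((1 - α₀ ^ 2 * b ^ 2 * l₂') / d) : ℝ) : ℂ)
        + (starRingEnd ℂ) (q * ((Real.sqrt ((1 - α₀ ^ 2 * a ^ 2 * l₂') / d) : ℝ) : ℂ))
          * (q * ((Real.sqrt ((1 - α₀ ^ 2 * a ^ 2 * l₂') / d) : ℝ) : ℂ))
        = ((Real.sqrt ((1 - α₀ ^ 2 * b ^ 2 * l₂') / d)
              * Real.sqrt ((1 - α₀ ^ 2 * b ^ 2 * l₂') / d) : ℝ) : ℂ)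
          + ((starRingEnd ℂ) q * q)
            * ((Real.sqrt ((1 - α₀ ^ 2 * a ^ 2 * l₂') / d)
              * Real.sqrt ((1 - α₀ ^ 2 * a ^ 2 * l₂') / d) : ℝ) : ℂ) := by
      simp only [map_mul, Complex.conj_ofReal]
      push_cast
      ring
    rw [expand, hq1, one_mul, sX₂, sY₂, ← Complex.ofReal_add, key2]
  · rw [ha₁₁, ha₁₂, ha₂₁, ha₂₂]
    have expand : (starRingEnd ℂ) ((Real.sqrt ((-1 + α₀ ^ 2 * b ^ 2 * l₁') / d) : ℝ) : ℂ)
          * ((Real.sqrt ((1 - α₀ ^ 2 * b ^ 2 * l₂') / d) : ℝ) : ℂ)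
        + (starRingEnd ℂ) (-q * ((Real.sqrt ((-1 + α₀ ^ 2 * a ^ 2 * l₁') / d) : ℝ) : ℂ))
          * (q * ((Real.sqrt ((1 - α₀ ^ 2 * a ^ 2 * l₂') / d) : ℝ) : ℂ))
        = ((Real.sqrt ((-1 + α₀ ^ 2 * b ^ 2 * l₁') / d)
              * Real.sqrt ((1 - α₀ ^ 2 * b ^ 2 * l₂') / d) : ℝ) : ℂ)
          - ((starRingEnd ℂ) q * q)
            * ((Real.sqrt ((-1 + α₀ ^ 2 * a ^ 2 * l₁') / d)
              * Real.sqrt ((1 - α₀ ^ 2 * a ^ 2 * l₂') / d) : ℝ) : ℂ) := by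
      simp only [map_mul, map_neg, Complex.conj_ofReal]
      push_cast
      ring
    rw [expand, hq1, one_mul, hrs, sub_self]
  · rw [ha₁₁, ha₁₂, ha₂₁, ha₂₂]
    have expand : (starRingEnd ℂ) ((Real.sqrt ((1 - α₀ ^ 2 * b ^ 2 * l₂') / d) : ℝ) : ℂ)
          * ((Real.sqrt ((-1 + α₀ ^ 2 * b ^ 2 * l₁') / d) : ℝ) : ℂ)
        + (starRingEnd ℂ) (q * ((Real.sqrt ((1 - α₀ ^ 2 * a ^ 2 * l₂') / d) : ℝ) : ℂ))
          * (-q * ((Real.sqrt ((-1 + α₀ ^ 2 * a ^ 2 * l₁') / d) : ℝ) : ℂ))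
        = ((Real.sqrt ((-1 + α₀ ^ 2 * b ^ 2 * l₁') / d)
              * Real.sqrt ((1 - α₀ ^ 2 * b ^ 2 * l₂') / d) : ℝ) : ℂ)
          - ((starRingEnd ℂ) q * q)
            * ((Real.sqrt ((-1 + α₀ ^ 2 * a ^ 2 * l₁') / d)
              * Real.sqrt ((1 - α₀ ^ 2 * a ^ 2 * l₂') / d) : ℝ) : ℂ) := by
      simp only [map_mul, map_neg, Complex.conj_ofReal]
      push_cast
      ring
    rw [expand, hq1, one_mul, hrs, sub_self]
end

section
/- Let τ : H → ℂ² be the bounded linear map τv = (⟨v,u₁⟩, ⟨v,u₂⟩) associated to orthonormal-free vectors u₁ ⊥ u₂ in a Hilbert space H. Then τ*τ = V where V = ⟨·,u₁⟩u₁ + ⟨·,u₂⟩u₂, and for any self-adjoint operator H₀ on H, any α ∈ ℝ and Im z ≠ 0, the operator B(α,z) = I + α·τ(H₀ - z)⁻¹τ* on ℂ² is invertible with inverse B(α,z)⁻¹ = I - α·τ(H₀ + αV - z)⁻¹τ*. -/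
set_option maxHeartbeats 1000000 in
/-- For the rank-two perturbation `V = τ*τ` built from orthogonal vectors `u₁ ⊥ u₂`,
one has `τ*τ = V`, and for non-real `z` the 2×2 matrix operator
`B(α,z) = I + α·τR₀(z)τ*` is invertible with inverse `I - α·τR_α(z)τ*`. -/
theorem tau_adjoint_and_B_invertible
    {H : Type*} [NormedAddCommGroup H] [InnerProductSpace ℂ H] [CompleteSpace H]
    (u₁ u₂ : H) (hu : (inner ℂ u₁ u₂ : ℂ) = 0)
    (τ : H →L[ℂ] EuclideanSpace ℂ (Fin 2))
    (hτ : ∀ v : H, τ v = ![(inner ℂ u₁ v : ℂ), (inner ℂ u₂ v : ℂ)])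
    (V : H →L[ℂ] H)
    (hV : ∀ v : H, V v = (inner ℂ u₁ v : ℂ) • u₁ + (inner ℂ u₂ v : ℂ) • u₂)
    (H₀ : H →L[ℂ] H) (hH₀ : IsSelfAdjoint H₀)
    (α : ℝ) (z : ℂ) (hz : z.im ≠ 0) :
    (ContinuousLinearMap.adjoint τ) ∘L τ = V ∧
    (1 + (α : ℂ) • (τ ∘L Ring.inverse (H₀ - z • (1 : H →L[ℂ] H)) ∘L
          ContinuousLinearMap.adjoint τ)) *
        (1 - (α : ℂ) • (τ ∘L Ring.inverse (H₀ + (α : ℂ) • V - z • (1 : H →L[ℂ] H)) ∘L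
          ContinuousLinearMap.adjoint τ)) = 1 ∧
    (1 - (α : ℂ) • (τ ∘L Ring.inverse (H₀ + (α : ℂ) • V - z • (1 : H →L[ℂ] H)) ∘L
          ContinuousLinearMap.adjoint τ)) *
        (1 + (α : ℂ) • (τ ∘L Ring.inverse (H₀ - z • (1 : H →L[ℂ] H)) ∘L
          ContinuousLinearMap.adjoint τ)) = 1 := by
  -- Part 1 : τ* ∘ τ = V
  have h1 : (ContinuousLinearMap.adjoint τ) ∘L τ = V := by
    ext v
    refine ext_inner_left ℂ fun w => ?_
    rw [ContinuousLinearMap.comp_apply, ContinuousLinearMap.adjoint_inner_right, PiLp.inner_apply, hτ, hτ, hV]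
    simp only [PiLp.inner_apply, Fin.sum_univ_two, Matrix.cons_val_zero, Matrix.cons_val_one,
      Matrix.head_cons, RCLike.inner_apply, inner_add_right, inner_smul_right, starRingEnd_apply]
    rw [← starRingEnd_apply, ← starRingEnd_apply, inner_conj_symm, inner_conj_symm]
  refine ⟨h1, ?_⟩
  set a : ℂ := (α : ℂ) with ha
  -- V is self-adjoint
  have hVsa : IsSelfAdjoint V := by
    rw [← h1, IsSelfAdjoint, ContinuousLinearMap.star_eq_adjoint,
      ContinuousLinearMap.adjoint_comp, ContinuousLinearMap.adjoint_adjoint]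
  have hVsa' : IsSelfAdjoint (H₀ + a • V) := by
    rw [IsSelfAdjoint, star_add, star_smul, hH₀.star_eq, hVsa.star_eq, ha, Complex.star_def,
      Complex.conj_ofReal]
  -- selfadjoint minus nonreal scalar is a unit
  have hunit : ∀ (A : H →L[ℂ] H), IsSelfAdjoint A → IsUnit (A - z • (1 : H →L[ℂ] H)) := by
    intro A hA
    have hz' : z ∉ spectrum ℂ A := fun hm => hz (hA.im_eq_zero_of_mem_spectrum hm)
    rw [spectrum.notMem_iff] at hz'
    simpa [Algebra.algebraMap_eq_smul_one, neg_sub] using hz'.neg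
  set T₀ : H →L[ℂ] H := H₀ - z • 1 with hT₀
  set T₁ : H →L[ℂ] H := H₀ + a • V - z • 1 with hT₁
  have hU₀ : IsUnit T₀ := hunit _ hH₀
  have hU₁ : IsUnit T₁ := hunit _ hVsa'
  set R₀ : H →L[ℂ] H := Ring.inverse T₀ with hR₀
  set R₁ : H →L[ℂ] H := Ring.inverse T₁ with hR₁
  have hT : T₁ - T₀ = a • V := by rw [hT₀, hT₁]; abel
  have c₀l : R₀ * T₀ = 1 := Ring.inverse_mul_cancel _ hU₀
  have c₀r : T₀ * R₀ = 1 := Ring.mul_inverse_cancel _ hU₀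
  have c₁l : R₁ * T₁ = 1 := Ring.inverse_mul_cancel _ hU₁
  have c₁r : T₁ * R₁ = 1 := Ring.mul_inverse_cancel _ hU₁
  -- second resolvent identity, both forms
  have hres : R₀ - R₁ = a • (R₀ * (V * R₁)) := by
    calc R₀ - R₁ = R₀ * T₁ * R₁ - R₀ * T₀ * R₁ := by
          rw [mul_assoc R₀ T₁ R₁, c₁r, mul_one, c₀l, one_mul]
      _ = R₀ * (T₁ - T₀) * R₁ := by noncomm_ring
      _ = a • (R₀ * (V * R₁)) := by rw [hT, mul_smul_comm, smul_mul_assoc, mul_assoc]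
  have hres' : R₀ - R₁ = a • (R₁ * (V * R₀)) := by
    calc R₀ - R₁ = R₁ * T₁ * R₀ - R₁ * T₀ * R₀ := by
          rw [mul_assoc R₁ T₀ R₀, c₀r, mul_one, c₁l, one_mul]
      _ = R₁ * (T₁ - T₀) * R₀ := by noncomm_ring
      _ = a • (R₁ * (V * R₀)) := by rw [hT, mul_smul_comm, smul_mul_assoc, mul_assoc]
  set τs := ContinuousLinearMap.adjoint τ with hτs
  set X := τ ∘L R₀ ∘L τs with hX
  set Y := τ ∘L R₁ ∘L τs with hY
  set Z := τ ∘L (R₀ * (V * R₁)) ∘L τs with hZ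
  set Z' := τ ∘L (R₁ * (V * R₀)) ∘L τs with hZ'
  have hpt : ∀ x : H, τs (τ x) = V x := fun x => by
    rw [← h1]; rfl
  have hXY : X * Y = Z := by
    ext v
    simp only [hX, hY, hZ, ContinuousLinearMap.mul_def, ContinuousLinearMap.comp_apply, hpt]
  have hYX : Y * X = Z' := by
    ext v
    simp only [hX, hY, hZ', ContinuousLinearMap.mul_def, ContinuousLinearMap.comp_apply, hpt]
  have hsub : X - Y = a • Z := by
    ext v
    have := congrFun (congrArg DFunLike.coe hres) (τs v)
    simp only [ContinuousLinearMap.sub_apply, ContinuousLinearMap.smul_apply] at this ⊢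
    simp only [hX, hY, hZ, ContinuousLinearMap.comp_apply, ← map_sub, this, map_smul]
  have hsub' : X - Y = a • Z' := by
    ext v
    have := congrFun (congrArg DFunLike.coe hres') (τs v)
    simp only [ContinuousLinearMap.sub_apply, ContinuousLinearMap.smul_apply] at this ⊢
    simp only [hX, hY, hZ', ContinuousLinearMap.comp_apply, ← map_sub, this, map_smul]
  constructor
  · have key : (a * a) • Z = a • X - a • Y := by
      rw [← smul_smul, ← smul_sub, hsub]
    calc (1 + a • X) * (1 - a • Y)
        = 1 - a • Y + (a • X - (a • X) * (a • Y)) := by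
          rw [add_mul, one_mul, mul_sub, mul_one]
      _ = 1 - a • Y + (a • X - (a * a) • Z) := by
          rw [smul_mul_smul_comm, hXY]
      _ = 1 := by rw [key]; abel
  · have key : (a * a) • Z' = a • X - a • Y := by
      rw [← smul_smul, ← smul_sub, hsub']
    calc (1 - a • Y) * (1 + a • X)
        = 1 + a • X - (a • Y + (a • Y) * (a • X)) := by
          rw [sub_mul, one_mul, mul_add, mul_one]
      _ = 1 + a • X - (a • Y + (a * a) • Z') := by
          rw [smul_mul_smul_comm, hYX]
      _ = 1 := by rw [key]; abel
end

section
/- Let H₀ be self-adjoint on a Hilbert space H, u₁, u₂ ∈ H with u₁ ⊥ u₂, V = ⟨·,u₁⟩u₁ + ⟨·,u₂⟩u₂, H_α = H₀ + αV, and B(α,z) = I + ατR₀(z)τ* on ℂ² with τv = (⟨v,u₁⟩,⟨v,u₂⟩). Then for v, w ∈ H and Im z ≠ 0, ⟨R_α(z)v,w⟩ = ⟨R₀(z)v,w⟩ - (α/det B(α,z))·Σ_{j,k=1}^{2} b̃ⱼₖ(α,z)⟨R₀(z)v,uⱼ⟩⟨R₀(z)uₖ,w⟩, where b̃ⱼₖ(α,z)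 are the entries of the cofactor (adjugate-transpose) matrix of B(α,z). -/
lemma aux_unit {H : Type*} [NormedAddCommGroup H] [InnerProductSpace ℂ H] [CompleteSpace H]
    (A : H →L[ℂ] H) (hA : IsSelfAdjoint A) (z : ℂ) (hz : z.im ≠ 0) :
    IsUnit (A - z • (1 : H →L[ℂ] H)) := by
  have h : z ∉ spectrum ℂ A := fun hmem => hz (hA.im_eq_zero_of_mem_spectrum hmem)
  rw [spectrum.notMem_iff, Algebra.algebraMap_eq_smul_one] at h
  simpa [neg_sub] using h.neg

set_option maxHeartbeats 1000000

/-- Lemma 4.1: the matrix elements of the resolvent of the rank-two perturbation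
`H_α = H₀ + αV` are expressed through free-resolvent matrix elements via the cofactor
matrix of `B(α,z)`.  (Here `⟨·,·⟩` is conjugate-linear in the second variable, so the
paper's `⟨x, y⟩` is `inner y x` in Mathlib's convention.) -/
theorem rank_two_resolvent_formula
    {H : Type*} [NormedAddCommGroup H] [InnerProductSpace ℂ H] [CompleteSpace H]
    (u : Fin 2 → H) (hu : (inner ℂ (u 0) (u 1) : ℂ) = 0)
    (V : H →L[ℂ] H)
    (hV : ∀ v : H, V v = ∑ j : Fin 2, (inner ℂ (u j) v : ℂ) • u j)
    (H₀ : H →L[ℂ] H) (hH₀ : IsSelfAdjoint H₀)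
    (α : ℝ) (z : ℂ) (hz : z.im ≠ 0)
    (R₀ Rα : H →L[ℂ] H)
    (hR₀ : R₀ = Ring.inverse (H₀ - z • (1 : H →L[ℂ] H)))
    (hRα : Rα = Ring.inverse (H₀ + (α : ℂ) • V - z • (1 : H →L[ℂ] H)))
    (B : Matrix (Fin 2) (Fin 2) ℂ)
    (hB : B = 1 + (α : ℂ) • Matrix.of (fun j k => (inner ℂ (u j) (R₀ (u k)) : ℂ)))
    (v w : H) :
    (inner ℂ w (Rα v) : ℂ) =
      (inner ℂ w (R₀ v) : ℂ) -
        ((α : ℂ) / B.det) *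
          ∑ j : Fin 2, ∑ k : Fin 2,
            B.adjugate k j * (inner ℂ (u j) (R₀ v) : ℂ) * (inner ℂ w (R₀ (u k)) : ℂ) := by
  -- V is self-adjoint
  have hVsa : IsSelfAdjoint V := by
    rw [ContinuousLinearMap.isSelfAdjoint_iff_isSymmetric]
    intro x y
    simp only [ContinuousLinearMap.coe_coe, hV, sum_inner, inner_sum, inner_smul_left,
      inner_smul_right, inner_conj_symm]
    exact Finset.sum_congr rfl fun j _ => by ring
  have hHαsa : IsSelfAdjoint (H₀ + (α : ℂ) • V) := by
    rw [ContinuousLinearMap.isSelfAdjoint_iff_isSymmetric]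
    intro x y
    have hs0 := (ContinuousLinearMap.isSelfAdjoint_iff_isSymmetric.mp hH₀) x y
    have hsV := (ContinuousLinearMap.isSelfAdjoint_iff_isSymmetric.mp hVsa) x y
    simp only [ContinuousLinearMap.coe_coe, ContinuousLinearMap.add_apply,
      ContinuousLinearMap.smul_apply, inner_add_left, inner_add_right, inner_smul_left,
      inner_smul_right, Complex.conj_ofReal] at *
    rw [hs0, hsV]
  have hA₀ := aux_unit H₀ hH₀ z hz
  have hAα := aux_unit _ hHαsa z hz
  have h1 : (H₀ - z • (1 : H →L[ℂ] H)) * R₀ = 1 := by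
    rw [hR₀]; exact Ring.mul_inverse_cancel _ hA₀
  have h2 : R₀ * (H₀ - z • (1 : H →L[ℂ] H)) = 1 := by
    rw [hR₀]; exact Ring.inverse_mul_cancel _ hA₀
  have h3 : Rα * (H₀ + (α : ℂ) • V - z • (1 : H →L[ℂ] H)) = 1 := by
    rw [hRα]; exact Ring.inverse_mul_cancel _ hAα
  have h4 : (H₀ + (α : ℂ) • V - z • (1 : H →L[ℂ] H)) * Rα = 1 := by
    rw [hRα]; exact Ring.mul_inverse_cancel _ hAα
  have e1 : (H₀ + (α : ℂ) • V - z • (1 : H →L[ℂ] H))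
      = (H₀ - z • (1 : H →L[ℂ] H)) + (α : ℂ) • V := add_sub_right_comm _ _ _
  -- second resolvent identity
  have hres : Rα + (α : ℂ) • (R₀ * V * Rα) = R₀ := by
    have h : R₀ * ((H₀ + (α : ℂ) • V - z • (1 : H →L[ℂ] H)) * Rα) = R₀ := by
      rw [h4, mul_one]
    rw [e1, add_mul, mul_add, ← mul_assoc, h2, one_mul, smul_mul_assoc, mul_smul_comm,
      ← mul_assoc] at h
    exact h
  set c := fun k : Fin 2 => (inner ℂ (u k) (Rα v) : ℂ) with hc
  have hresv : Rα v = R₀ v - (α : ℂ) • ∑ k : Fin 2, c k • R₀ (u k) := by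
    have h := congrArg (fun T : H →L[ℂ] H => T v) hres.symm
    simp only [ContinuousLinearMap.add_apply, ContinuousLinearMap.smul_apply,
      ContinuousLinearMap.mul_apply] at h
    rw [hV (Rα v)] at h
    rw [h, map_sum]
    simp only [map_smul]
    abel
  have hBc : ∀ j, ∑ k, B j k * c k = inner ℂ (u j) (R₀ v) := by
    intro j
    have h := congrArg (fun y : H => (inner ℂ (u j) y : ℂ)) hresv
    simp only [inner_sub_right, inner_smul_right, inner_sum] at h
    rw [hB]
    simp only [Matrix.add_apply, Matrix.smul_apply, Matrix.one_apply, Matrix.of_apply,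
      smul_eq_mul, add_mul, Finset.sum_add_distrib, ite_mul, one_mul, zero_mul,
      Finset.sum_ite_eq, Finset.mem_univ, if_true]
    have hcj : (inner ℂ (u j) (Rα v) : ℂ) = c j := rfl
    rw [hcj] at h
    rw [h]
    have he : ∑ x : Fin 2, (α : ℂ) * inner ℂ (u j) (R₀ (u x)) * c x
        = (α : ℂ) * ∑ x : Fin 2, c x * inner ℂ (u j) (R₀ (u x)) := by
      rw [Finset.mul_sum]; exact Finset.sum_congr rfl fun k _ => by ring
    rw [he]; ring
  have hdet : B.det ≠ 0 := by
    intro h0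
    obtain ⟨c', hc'ne, hc'0⟩ := (Matrix.exists_mulVec_eq_zero_iff).mpr h0
    set φ : H := ∑ k : Fin 2, c' k • u k with hφ
    have hMc : ∀ j, c' j + (α : ℂ) * ∑ k, c' k * inner ℂ (u j) (R₀ (u k)) = 0 := by
      intro j
      have h := congrFun hc'0 j
      rw [hB] at h
      simp only [Matrix.mulVec, dotProduct, Matrix.add_apply, Matrix.smul_apply,
        Matrix.one_apply, Matrix.of_apply, smul_eq_mul, add_mul, Finset.sum_add_distrib,
        ite_mul, one_mul, zero_mul, Finset.sum_ite_eq, Finset.mem_univ, if_true,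
        Pi.zero_apply] at h
      have he : (α : ℂ) * ∑ k : Fin 2, c' k * inner ℂ (u j) (R₀ (u k))
          = ∑ x : Fin 2, (α : ℂ) * inner ℂ (u j) (R₀ (u x)) * c' x := by
        rw [Finset.mul_sum]; exact Finset.sum_congr rfl fun k _ => by ring
      rw [he]; exact h
    have hinner : ∀ j : Fin 2, (inner ℂ (u j) (R₀ φ) : ℂ) = ∑ k, c' k * inner ℂ (u j) (R₀ (u k)) := by
      intro j
      rw [hφ, map_sum]
      simp [inner_sum, inner_smul_right, inner_add_right, map_smul]
    have hAψ : (H₀ + (α : ℂ) • V - z • (1 : H →L[ℂ] H)) (R₀ φ) = 0 := by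
      have hA0 : (H₀ - z • (1 : H →L[ℂ] H)) (R₀ φ) = φ := by
        have := congrArg (fun T : H →L[ℂ] H => T φ) h1
        simpa [ContinuousLinearMap.mul_apply] using this
      have he : (H₀ + (α : ℂ) • V - z • (1 : H →L[ℂ] H)) (R₀ φ)
          = (H₀ - z • (1 : H →L[ℂ] H)) (R₀ φ) + (α : ℂ) • V (R₀ φ) := by
        rw [e1]; simp
      rw [he, hA0, hV (R₀ φ)]
      rw [Finset.smul_sum]
      have hterm : ∀ j : Fin 2, (α : ℂ) • ((inner ℂ (u j) (R₀ φ) : ℂ) • u j) = (- c' j) • u j := by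
        intro j
        rw [smul_smul, hinner j]
        congr 1
        linear_combination hMc j
      rw [Finset.sum_congr rfl fun j _ => hterm j]
      simp only [neg_smul]
      rw [Finset.sum_neg_distrib, ← hφ]
      abel
    have hψ0 : R₀ φ = 0 := by
      have h := congrArg (fun T : H →L[ℂ] H => T (R₀ φ)) h3.symm
      simp only [ContinuousLinearMap.one_apply, ContinuousLinearMap.mul_apply] at h
      rw [h, hAψ, map_zero]
    have hcz : ∀ j, c' j = 0 := by
      intro j
      have h := hMc j
      rw [← hinner j, hψ0, inner_zero_right, mul_zero, add_zero] at h
      exact h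
    exact hc'ne (funext hcz)
  have hadj : ∀ k, ∑ j, B.adjugate k j * inner ℂ (u j) (R₀ v) = B.det * c k := by
    intro k
    have h := congrFun (congrFun (congrArg Matrix.mulVec (Matrix.adjugate_mul B))
      c) k
    rw [← Matrix.mulVec_mulVec] at h
    have hx : B.mulVec c = fun j => (inner ℂ (u j) (R₀ v) : ℂ) := by
      funext j
      simpa [Matrix.mulVec, dotProduct] using hBc j
    rw [hx] at h
    simpa [Matrix.mulVec, dotProduct, Matrix.smul_apply, Matrix.one_apply,
      Finset.sum_ite_eq] using h
  have hfinal : (inner ℂ w (Rα v) : ℂ)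
      = inner ℂ w (R₀ v) - (α : ℂ) * ∑ k, c k * inner ℂ w (R₀ (u k)) := by
    rw [hresv]
    simp [inner_sub_right, inner_smul_right, inner_add_right, inner_sum, smul_smul,
      Finset.mul_sum, mul_add, Fin.sum_univ_two]
    ring
  rw [hfinal]
  congr 1
  rw [Finset.sum_comm]
  have hsw : ∀ k : Fin 2,
      ∑ j : Fin 2, B.adjugate k j * (inner ℂ (u j) (R₀ v) : ℂ) * inner ℂ w (R₀ (u k))
      = (B.det * c k) * inner ℂ w (R₀ (u k)) := by
    intro k
    rw [← hadj k, Finset.sum_mul]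
  rw [Finset.sum_congr rfl fun k _ => hsw k]
  rw [Finset.mul_sum, Finset.mul_sum]
  refine Finset.sum_congr rfl fun k _ => ?_
  field_simp
end
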